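/- Let C be a multiset of k ≥ 1 roots of the holomorphic function f = g·h with g(z) = ∏_{α∈C}(z−α), and let m, r satisfy 4k(|m−m_C| + r_C + r)·γ(h,m) ≤ 1. Then M(f,k+1,m,r) ≤ 16e·γ(h,m)·|f_k(m)|, where M(f,k+1,m,r) = sup_{w∈D(m,r)}|f^{(k+1)}(w)/(k+1)!| and f_k = f^{(k)}/k!. -/

import Mathlib

open Complex Metric

def gammaSet (h : ℂ → ℂ) (z : ℂ) : Set ℝ :=
  {x | ∃ k : ℕ, 1 ≤ k ∧ x = ‖iteratedDeriv k h z / ((k.factorial : ℂ) * h z)‖ ^ ((1 : ℝ) / k)}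

namespace Stmt6Aux

open Finset Polynomial

lemma entire_deriv {f : ℂ → ℂ} (hf : Differentiable ℂ f) : Differentiable ℂ (deriv f) :=
  analyticOnNhd_univ_iff_differentiable.mp ((analyticOnNhd_univ_iff_differentiable.mpr hf).deriv)

lemma entire_iteratedDeriv {f : ℂ → ℂ} (hf : Differentiable ℂ f) (n : ℕ) :
    Differentiable ℂ (iteratedDeriv n f) := by
  induction n with
  | zero => simpa [iteratedDeriv_zero] using hf
  | succ n ih => rw [iteratedDeriv_succ]; exact entire_deriv ih

lemma choose_le_two_pow (n i : ℕ) : n.choose i ≤ 2 ^ n := by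
  rcases le_or_gt i n with hle | hlt
  · calc n.choose i ≤ ∑ m ∈ range (n+1), n.choose m :=
        Finset.single_le_sum (fun _ _ => Nat.zero_le _) (mem_range.mpr (Nat.lt_succ_of_le hle))
      _ = 2 ^ n := Nat.sum_range_choose n
  · simp [Nat.choose_eq_zero_of_lt hlt]

lemma pascal_sum (F G : ℕ → ℂ) (n : ℕ) :
    ∑ i ∈ range (n+2), ((n+1).choose i : ℂ) * F i * G (n+1-i)
      = ∑ i ∈ range (n+1), (n.choose i : ℂ) * (F (i+1) * G (n-i) + F i * G (n-i+1)) := by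
  rw [Finset.sum_range_succ' (fun i => ((n+1).choose i : ℂ) * F i * G (n+1-i)) (n+1)]
  have h1 : ∀ i ∈ range (n+1), ((n+1).choose (i+1) : ℂ) * F (i+1) * G (n+1-(i+1))
      = (n.choose i : ℂ) * F (i+1) * G (n-i) + (n.choose (i+1) : ℂ) * F (i+1) * G (n-i) := by
    intro i hi
    have : n+1-(i+1) = n-i := by omega
    rw [this, Nat.choose_succ_succ]
    push_cast
    ring
  rw [Finset.sum_congr rfl h1, Finset.sum_add_distrib]
  have h2 : ∑ i ∈ range (n+1), (n.choose (i+1) : ℂ) * F (i+1) * G (n-i) + ((n+1).choose 0 : ℂ) * F 0 * G (n+1-0)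
      = ∑ i ∈ range (n+1), (n.choose i : ℂ) * F i * G (n-i+1) := by
    rw [Finset.sum_range_succ' (fun i => (n.choose i : ℂ) * F i * G (n-i+1)) n]
    rw [Finset.sum_range_succ (fun i => (n.choose (i+1) : ℂ) * F (i+1) * G (n-i))]
    simp only [Nat.choose_succ_self, Nat.cast_zero, zero_mul, add_zero, Nat.choose_zero_right,
      Nat.cast_one, one_mul, Nat.sub_zero]
    congr 1
    refine Finset.sum_congr rfl fun i hi => ?_
    have hi' : i < n := mem_range.mp hi
    have : n - (i+1) + 1 = n - i := by omega
    rw [this]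
  rw [add_assoc, h2, ← Finset.sum_add_distrib]
  refine Finset.sum_congr rfl fun i hi => ?_
  ring

lemma leibniz {f g : ℂ → ℂ} (hf : Differentiable ℂ f) (hg : Differentiable ℂ g) :
    ∀ (n : ℕ) (x : ℂ), iteratedDeriv n (fun y => f y * g y) x =
      ∑ i ∈ range (n+1), (n.choose i : ℂ) * iteratedDeriv i f x * iteratedDeriv (n-i) g x := by
  intro n
  induction n with
  | zero => intro x; simp
  | succ n ih =>
    intro x
    have hprod : iteratedDeriv n (fun y => f y * g y) = fun y =>
        ∑ i ∈ range (n+1), (n.choose i : ℂ) * iteratedDeriv i f y * iteratedDeriv (n-i) g y :=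
      funext ih
    rw [iteratedDeriv_succ, hprod]
    rw [deriv_fun_sum (A := fun i y => (n.choose i : ℂ) * iteratedDeriv i f y * iteratedDeriv (n-i) g y) (fun i _ => (((differentiable_const ((n.choose i : ℂ))).mul
        (entire_iteratedDeriv hf i)).mul (entire_iteratedDeriv hg (n-i))).differentiableAt)]
    have hterm : ∀ i, deriv (fun y => (n.choose i : ℂ) * iteratedDeriv i f y * iteratedDeriv (n-i) g y) x
        = (n.choose i : ℂ) * (iteratedDeriv (i+1) f x * iteratedDeriv (n-i) g x
            + iteratedDeriv i f x * iteratedDeriv (n-i+1) g x) := by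
      intro i
      rw [deriv_fun_mul (c := fun y => (n.choose i : ℂ) * iteratedDeriv i f y) (((differentiable_const _).mul (entire_iteratedDeriv hf i)) x)
          ((entire_iteratedDeriv hg (n-i)) x),
        deriv_const_mul _ ((entire_iteratedDeriv hf i) x), ← iteratedDeriv_succ, ← iteratedDeriv_succ]
      ring
    simp_rw [hterm]
    exact (pascal_sum (fun i => iteratedDeriv i f x) (fun j => iteratedDeriv j g x) n).symm

lemma iteratedDeriv_polyeval (p : Polynomial ℂ) (n : ℕ) :
    iteratedDeriv n (fun z => p.eval z) = fun z => ((⇑Polynomial.derivative)^[n] p).eval z := by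
  induction n generalizing p with
  | zero => simp
  | succ n ih =>
    rw [iteratedDeriv_succ', funext fun z => Polynomial.deriv p (x := z), ih,
      Function.iterate_succ_apply]

lemma taylor_prod (C : Multiset ℂ) (w : ℂ) :
    (Polynomial.taylor w) (C.map fun α => X - Polynomial.C α).prod
      = ((C.map fun α => w - α).map fun a => X + Polynomial.C a).prod := by
  rw [Polynomial.taylor_apply, Polynomial.multiset_prod_comp, Multiset.map_map, Multiset.map_map]
  congr 1
  apply Multiset.map_congr rfl
  intro α _
  simp only [Function.comp_apply, Polynomial.sub_comp, Polynomial.X_comp, Polynomial.C_comp]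
  rw [map_sub]
  ring

lemma G_eq_eval (C : Multiset ℂ) : (fun z => (C.map fun α => z - α).prod)
    = fun z => ((C.map fun α => X - Polynomial.C α).prod).eval z := by
  funext z
  rw [Polynomial.eval_multiset_prod, Multiset.map_map]
  congr 1
  exact Multiset.map_congr rfl fun α _ => by simp

lemma iD_G_eq (C : Multiset ℂ) (i : ℕ) (w : ℂ) :
    iteratedDeriv i (fun z => (C.map fun α => z - α).prod) w
      = (i.factorial : ℂ) * ((Polynomial.taylor w) (C.map fun α => X - Polynomial.C α).prod).coeff i := by
  rw [G_eq_eval, iteratedDeriv_polyeval]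
  have hD : (⇑(Polynomial.derivative (R := ℂ)))^[i] (C.map fun α => X - Polynomial.C α).prod
      = i.factorial • (Polynomial.hasseDeriv i ((C.map fun α => X - Polynomial.C α).prod)) := by
    rw [← Polynomial.factorial_smul_hasseDeriv i, LinearMap.smul_apply]
  rw [hD, Polynomial.taylor_coeff]
  simp [nsmul_eq_mul]

lemma prod_norm_le (ρ : ℝ) : ∀ (t : Multiset ℂ), (∀ a ∈ t, ‖a‖ ≤ ρ) → ‖t.prod‖ ≤ ρ ^ Multiset.card t := by
  intro t
  induction t using Multiset.induction_on with
  | empty => simp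
  | cons a s ihs =>
    intro h
    rw [Multiset.prod_cons, Multiset.card_cons, pow_succ', norm_mul]
    exact mul_le_mul (h a (Multiset.mem_cons_self a s))
      (ihs fun b hb => h b (Multiset.mem_cons_of_mem hb)) (norm_nonneg _)
      ((norm_nonneg a).trans (h a (Multiset.mem_cons_self a s)))

lemma esymm_norm_le (S : Multiset ℂ) (ρ : ℝ) (hS : ∀ a ∈ S, ‖a‖ ≤ ρ) (n : ℕ) :
    ‖S.esymm n‖ ≤ ((Multiset.card S).choose n : ℝ) * ρ ^ n := by
  rw [Multiset.esymm]
  refine le_trans (norm_multiset_sum_le _) ?_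
  rw [Multiset.map_map]
  have hb : ∀ x ∈ (S.powersetCard n).map fun t => ‖Multiset.prod t‖, x ≤ ρ ^ n := by
    intro x hx
    obtain ⟨t, ht, rfl⟩ := Multiset.mem_map.mp hx
    obtain ⟨hle, hcard⟩ := Multiset.mem_powersetCard.mp ht
    rw [← hcard]
    exact prod_norm_le ρ t fun a ha => hS a (Multiset.mem_of_le hle ha)
  calc ((S.powersetCard n).map fun t => ‖Multiset.prod t‖).sum
      ≤ Multiset.card ((S.powersetCard n).map fun t => ‖Multiset.prod t‖) • (ρ ^ n) :=
        Multiset.sum_le_card_nsmul _ _ hb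
    _ = ((Multiset.card S).choose n : ℝ) * ρ ^ n := by
        rw [Multiset.card_map, Multiset.card_powersetCard, nsmul_eq_mul]

lemma taylor_coeff_esymm (C : Multiset ℂ) (k i : ℕ) (hcard : Multiset.card C = k) (hik : i ≤ k) (w : ℂ) :
    ((Polynomial.taylor w) (C.map fun α => X - Polynomial.C α).prod).coeff i
      = (C.map fun α => w - α).esymm (k - i) := by
  rw [taylor_prod]
  rw [Multiset.prod_X_add_C_coeff _ (by simp [hcard, hik])]
  simp [hcard]

lemma natDeg_prod_le (C : Multiset ℂ) :
    ((C.map fun α => X - Polynomial.C α).prod).natDegree ≤ Multiset.card C := by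
  refine le_trans (Polynomial.natDegree_multiset_prod_le _) ?_
  rw [Multiset.map_map]
  simp [Function.comp_def, Polynomial.natDegree_X_sub_C]

lemma iD_G_succ_zero (C : Multiset ℂ) (k : ℕ) (hcard : Multiset.card C = k) (w : ℂ) :
    iteratedDeriv (k+1) (fun z => (C.map fun α => z - α).prod) w = 0 := by
  rw [iD_G_eq, Polynomial.coeff_eq_zero_of_natDegree_lt, mul_zero]
  rw [Polynomial.natDegree_taylor]
  exact lt_of_le_of_lt (by simpa [hcard] using natDeg_prod_le C) (Nat.lt_succ_self k)

lemma iD_G_norm (C : Multiset ℂ) (k i : ℕ) (hcard : Multiset.card C = k) (hik : i ≤ k)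
    (w : ℂ) (ρ : ℝ) (hroots : ∀ α ∈ C, ‖w - α‖ ≤ ρ) :
    ‖iteratedDeriv i (fun z => (C.map fun α => z - α).prod) w‖
      ≤ (i.factorial : ℝ) * (k.choose i) * ρ ^ (k - i) := by
  rw [iD_G_eq, taylor_coeff_esymm C k i hcard hik, norm_mul, Complex.norm_natCast]
  rw [mul_assoc]
  refine mul_le_mul_of_nonneg_left ?_ (by positivity)
  have := esymm_norm_le (C.map fun α => w - α) ρ (by
    intro a ha
    obtain ⟨α, hα, rfl⟩ := Multiset.mem_map.mp ha
    exact hroots α hα) (k - i)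
  rw [Multiset.card_map, hcard, Nat.choose_symm hik] at this
  exact this

lemma gamma_nonneg {h : ℂ → ℂ} {m : ℂ} {γ : ℝ} (hγ : IsLUB (gammaSet h m) γ) : 0 ≤ γ :=
  le_trans (by positivity) (hγ.1 ⟨1, le_refl 1, rfl⟩)

lemma hm_coeff {h : ℂ → ℂ} {m : ℂ} {γ : ℝ} (hγ : IsLUB (gammaSet h m) γ) (hm : h m ≠ 0) (j : ℕ) :
    ‖iteratedDeriv j h m‖ ≤ (j.factorial : ℝ) * γ ^ j * ‖h m‖ := by
  rcases Nat.eq_zero_or_pos j with rfl | hj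
  · simp
  · have hx : ‖iteratedDeriv j h m / ((j.factorial : ℂ) * h m)‖ ^ ((1 : ℝ)/j) ≤ γ :=
      hγ.1 ⟨j, hj, rfl⟩
    set a := ‖iteratedDeriv j h m / ((j.factorial : ℂ) * h m)‖ with ha
    have ha0 : 0 ≤ a := norm_nonneg _
    have key : a ≤ γ ^ j := by
      have h1 : (a ^ ((1:ℝ)/j)) ^ (j : ℕ) ≤ γ ^ j :=
        pow_le_pow_left₀ (Real.rpow_nonneg ha0 _) hx j
      rwa [← Real.rpow_natCast (a ^ ((1:ℝ)/j)) j, ← Real.rpow_mul ha0, one_div,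
        inv_mul_cancel₀ (Nat.cast_ne_zero.mpr hj.ne' : (j:ℝ) ≠ 0), Real.rpow_one] at h1
    have hD : (0:ℝ) < ‖(j.factorial : ℂ) * h m‖ :=
      norm_pos_iff.mpr (mul_ne_zero (Nat.cast_ne_zero.mpr (Nat.factorial_ne_zero j)) hm)
    rw [ha, norm_div] at key
    have := (div_le_iff₀ hD).mp key
    calc ‖iteratedDeriv j h m‖ ≤ γ ^ j * ‖(j.factorial : ℂ) * h m‖ := this
      _ = (j.factorial : ℝ) * γ ^ j * ‖h m‖ := by
          rw [norm_mul, Complex.norm_natCast]; ring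

lemma iD_iD (h : ℂ → ℂ) (l j : ℕ) : iteratedDeriv l (iteratedDeriv j h) = iteratedDeriv (l + j) h := by
  simp only [iteratedDeriv_eq_iterate]
  exact (Function.iterate_add_apply _ l j h).symm

lemma fact_add_le (l j : ℕ) : ((l+j).factorial : ℝ) ≤ 2^(l+j) * (j.factorial : ℝ) * (l.factorial : ℝ) := by
  have h1 : (j+l).choose l * j.factorial * l.factorial = (j+l).factorial :=
    Nat.add_choose_mul_factorial_mul_factorial j l
  have h2 : (j+l).choose l ≤ 2^(j+l) := choose_le_two_pow (j+l) l
  have : (l+j).factorial ≤ 2^(l+j) * j.factorial * l.factorial := by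
    rw [add_comm l j, ← h1]
    exact Nat.mul_le_mul_right _ (Nat.mul_le_mul_right _ h2)
  exact_mod_cast this

lemma hw_coeff {h : ℂ → ℂ} (hdiff : Differentiable ℂ h) {m : ℂ} {γ r : ℝ}
    (hcoef : ∀ l, ‖iteratedDeriv l h m‖ ≤ (l.factorial : ℝ) * γ ^ l * ‖h m‖)
    (hγ0 : 0 ≤ γ) (hr : 0 ≤ r) (hq : 2 * γ * r ≤ 1/2)
    (j : ℕ) (w : ℂ) (hw : w ∈ closedBall m r) :
    ‖iteratedDeriv j h w‖ ≤ 2 * (j.factorial : ℝ) * (2*γ) ^ j * ‖h m‖ := by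
  have HS := Complex.hasSum_taylorSeries_of_entire (entire_iteratedDeriv hdiff j) m w
  simp only [iD_iD h] at HS
  set c := (j.factorial : ℝ) * (2*γ) ^ j * ‖h m‖ with hc
  have hc0 : 0 ≤ c := by positivity
  set q := 2*γ*r with hqdef
  have hq0 : 0 ≤ q := by positivity
  have hq1 : q < 1 := lt_of_le_of_lt hq (by norm_num)
  have hwm : ‖w - m‖ ≤ r := by rwa [mem_closedBall, dist_eq_norm] at hw
  have hbound : ∀ l : ℕ,
      ‖((l.factorial : ℂ))⁻¹ • (w - m) ^ l • iteratedDeriv (l + j) h m‖ ≤ c * q ^ l := by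
    intro l
    rw [norm_smul, norm_smul, norm_inv, Complex.norm_natCast, norm_pow]
    have hfl : (0:ℝ) < (l.factorial : ℝ) := by exact_mod_cast Nat.factorial_pos l
    calc (l.factorial : ℝ)⁻¹ * (‖w - m‖ ^ l * ‖iteratedDeriv (l + j) h m‖)
        ≤ (l.factorial : ℝ)⁻¹ * (r ^ l * (((l+j).factorial : ℝ) * γ ^ (l+j) * ‖h m‖)) := by
          gcongr
          · exact hcoef (l+j)
      _ ≤ (l.factorial : ℝ)⁻¹ * (r ^ l * ((2^(l+j) * (j.factorial : ℝ) * (l.factorial : ℝ)) * γ ^ (l+j) * ‖h m‖)) := by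
          gcongr
          exact fact_add_le l j
      _ = c * q ^ l := by
          rw [hc, hqdef]
          rw [pow_add, pow_add γ, mul_pow, mul_pow]
          field_simp
          ring
  have hsum : Summable (fun l : ℕ => c * q ^ l) := (summable_geometric_of_lt_one hq0 hq1).mul_left c
  have hsn : Summable (fun l : ℕ => ‖((l.factorial : ℂ))⁻¹ • (w - m) ^ l • iteratedDeriv (l + j) h m‖) :=
    Summable.of_nonneg_of_le (fun _ => norm_nonneg _) hbound hsum
  rw [← HS.tsum_eq]
  calc ‖∑' l : ℕ, ((l.factorial : ℂ))⁻¹ • (w - m) ^ l • iteratedDeriv (l + j) h m‖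
      ≤ ∑' l : ℕ, ‖((l.factorial : ℂ))⁻¹ • (w - m) ^ l • iteratedDeriv (l + j) h m‖ :=
        norm_tsum_le_tsum_norm hsn
    _ ≤ ∑' l : ℕ, c * q ^ l := hsn.tsum_le_tsum hbound hsum
    _ = c * (1-q)⁻¹ := by rw [tsum_mul_left, tsum_geometric_of_lt_one hq0 hq1]
    _ ≤ c * 2 := by
        refine mul_le_mul_of_nonneg_left ?_ hc0
        calc (1-q)⁻¹ ≤ ((1:ℝ)/2)⁻¹ := by
              apply inv_anti₀ (by norm_num) (by linarith)
          _ = 2 := by norm_num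
    _ = 2 * (j.factorial : ℝ) * (2*γ) ^ j * ‖h m‖ := by rw [hc]; ring

lemma exp_le_inv_one_sub {x : ℝ} (h1 : x < 1) : Real.exp x ≤ (1-x)⁻¹ := by
  have h := Real.add_one_le_exp (-x)
  rw [Real.exp_neg] at h
  have hy := Real.exp_pos x
  have h2 := mul_le_mul_of_nonneg_left h hy.le
  rw [mul_inv_cancel₀ hy.ne'] at h2
  rw [inv_eq_one_div, le_div_iff₀ (by linarith)]
  nlinarith

lemma sum_choose_eq (x : ℝ) (k : ℕ) :
    ∑ i ∈ range (k+1), (k.choose i : ℝ) * x^(k-i) = (1+x)^k := by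
  rw [add_pow]
  exact Finset.sum_congr rfl fun i _ => by rw [one_pow]; ring

lemma one_add_pow_le_exp (x : ℝ) (k : ℕ) (hx : 0 ≤ x) : (1+x)^k ≤ Real.exp ((k:ℝ)*x) := by
  calc (1+x)^k ≤ (Real.exp x)^k :=
        pow_le_pow_left₀ (by linarith) (by linarith [Real.add_one_le_exp x]) k
    _ = Real.exp ((k:ℝ)*x) := (Real.exp_nat_mul x k).symm

lemma sum_full (x : ℝ) (k : ℕ) (hx : 0 ≤ x) (hkx : (k:ℝ)*x ≤ 1/2) :
    ∑ i ∈ range (k+1), (k.choose i : ℝ) * x^(k-i) ≤ 2 := by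
  rw [sum_choose_eq]
  have h2 := one_add_pow_le_exp x k hx
  have h3 : Real.exp ((k:ℝ)*x) ≤ Real.exp (1/2) := Real.exp_le_exp.mpr hkx
  have h4 : Real.exp (1/2 : ℝ) ≤ (1 - 1/2 : ℝ)⁻¹ := exp_le_inv_one_sub (by norm_num)
  norm_num at h4
  linarith

lemma sum_partial (x : ℝ) (k : ℕ) (hx : 0 ≤ x) (hkx : (k:ℝ)*x ≤ 1/4) :
    ∑ i ∈ range k, (k.choose i : ℝ) * x^(k-i) ≤ 1/3 := by
  have hfull := sum_choose_eq x k
  rw [Finset.sum_range_succ] at hfull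
  simp only [Nat.choose_self, Nat.cast_one, Nat.sub_self, pow_zero, one_mul, mul_one] at hfull
  have heq : ∑ i ∈ range k, (k.choose i : ℝ) * x^(k-i) = (1+x)^k - 1 := by linarith
  rw [heq]
  have h2 := one_add_pow_le_exp x k hx
  have h3 : Real.exp ((k:ℝ)*x) ≤ Real.exp (1/4) := Real.exp_le_exp.mpr hkx
  have h4 : Real.exp (1/4 : ℝ) ≤ (1 - 1/4 : ℝ)⁻¹ := exp_le_inv_one_sub (by norm_num)
  norm_num at h4
  linarith

end Stmt6Aux

open Stmt6Aux Finset in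
theorem stmt6 (C : Multiset ℂ) (k : ℕ) (hk : 1 ≤ k) (hcard : Multiset.card C = k)
    (mC : ℂ) (hmC : mC = C.sum / (k : ℂ))
    (rC : ℝ) (hrC : ∀ α ∈ C, ‖α - mC‖ ≤ rC)
    (h f : ℂ → ℂ) (hdiff : Differentiable ℂ h)
    (hf : ∀ w, f w = (C.map (fun α => w - α)).prod * h w)
    (m : ℂ) (r : ℝ) (hr : 0 ≤ r) (hm : h m ≠ 0)
    (hnv : ∀ w ∈ closedBall m r, h w ≠ 0)
    (γ : ℝ) (hγ : IsLUB (gammaSet h m) γ)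
    (hcond : 4 * k * (‖m - mC‖ + rC + r) * γ ≤ 1) :
    sSup ((fun w => ‖iteratedDeriv (k+1) f w‖ / (k+1).factorial) '' closedBall m r) ≤
      16 * Real.exp 1 * γ * ‖iteratedDeriv k f m / (k.factorial : ℂ)‖ := by
  have hγ0 : 0 ≤ γ := gamma_nonneg hγ
  set G : ℂ → ℂ := fun z => (C.map fun α => z - α).prod with hGdef
  have hGdiff : Differentiable ℂ G := by
    rw [hGdef, G_eq_eval]
    exact (Polynomial.differentiable _)
  have hfeq : f = fun y => G y * h y := funext hf
  obtain ⟨ρ₀, hρ₀def⟩ : ∃ x : ℝ, x = ‖m - mC‖ + rC := ⟨_, rfl⟩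
  obtain ⟨ρ, hρdef⟩ : ∃ x : ℝ, x = ‖m - mC‖ + rC + r := ⟨_, rfl⟩
  have hcond' : 4 * (k:ℝ) * ρ * γ ≤ 1 := by rw [hρdef]; exact hcond
  obtain ⟨α₀, hα₀⟩ : ∃ α, α ∈ C := by
    apply Multiset.exists_mem_of_ne_zero
    intro h0
    rw [h0] at hcard
    simp at hcard
    omega
  have hrC0 : 0 ≤ rC := le_trans (norm_nonneg _) (hrC α₀ hα₀)
  have hρ₀0 : 0 ≤ ρ₀ := by rw [hρ₀def]; positivity
  have hρ0 : 0 ≤ ρ := by rw [hρdef]; positivity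
  have hρ₀ρ : ρ₀ ≤ ρ := by rw [hρ₀def, hρdef]; linarith
  have hk1 : (1:ℝ) ≤ (k:ℝ) := by exact_mod_cast hk
  have hkγρ : (k:ℝ) * (γ * ρ) ≤ 1/4 := by nlinarith [hcond']
  have hγρ0 : 0 ≤ γ * ρ := mul_nonneg hγ0 hρ0
  have hγρ14 : γ * ρ ≤ 1/4 := by
    linarith [hkγρ, mul_nonneg (sub_nonneg.mpr hk1) hγρ0]
  have hγr : 2 * γ * r ≤ 1/2 := by
    have h1 : γ * r ≤ γ * ρ := by
      apply mul_le_mul_of_nonneg_left _ hγ0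
      rw [hρdef]; linarith
    linarith
  have hroots_m : ∀ α ∈ C, ‖m - α‖ ≤ ρ₀ := by
    intro α hα
    calc ‖m - α‖ = ‖(m - mC) + (mC - α)‖ := by rw [sub_add_sub_cancel]
      _ ≤ ‖m - mC‖ + ‖mC - α‖ := norm_add_le _ _
      _ ≤ ρ₀ := by rw [norm_sub_rev mC α, hρ₀def]; linarith [hrC α hα]
  have hroots_w : ∀ w ∈ closedBall m r, ∀ α ∈ C, ‖w - α‖ ≤ ρ := by
    intro w hw α hα
    have hwm : ‖w - m‖ ≤ r := by rwa [mem_closedBall, dist_eq_norm] at hw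
    calc ‖w - α‖ = ‖(w - m) + (m - α)‖ := by rw [sub_add_sub_cancel]
      _ ≤ ‖w - m‖ + ‖m - α‖ := norm_add_le _ _
      _ ≤ ρ := by rw [hρdef]; have := hroots_m α hα; rw [hρ₀def] at this; linarith
  have hcoefm := hm_coeff hγ hm
  have hfact : (0:ℝ) < (k.factorial : ℝ) := by exact_mod_cast Nat.factorial_pos k
  have hfact1 : (0:ℝ) < ((k+1).factorial : ℝ) := by exact_mod_cast Nat.factorial_pos (k+1)
  -- lower bound
  have hlow : (2/3 : ℝ) * ‖h m‖ ≤ ‖iteratedDeriv k f m / (k.factorial : ℂ)‖ := by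
    rw [hfeq]
    have hL := leibniz hGdiff hdiff k m
    have hGk : iteratedDeriv k G m = (k.factorial : ℂ) := by
      rw [hGdef, iD_G_eq, taylor_coeff_esymm C k k hcard le_rfl m]
      simp [Multiset.esymm, Multiset.powersetCard_zero_left]
    have hsplit : iteratedDeriv k (fun y => G y * h y) m
        = (∑ i ∈ range k, (k.choose i : ℂ) * iteratedDeriv i G m * iteratedDeriv (k-i) h m)
          + (k.factorial : ℂ) * h m := by
      rw [hL, Finset.sum_range_succ, hGk]
      simp
    set T := ∑ i ∈ range k, (k.choose i : ℂ) * iteratedDeriv i G m * iteratedDeriv (k-i) h m with hT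
    have hTb : ‖T‖ ≤ (1/3 : ℝ) * ((k.factorial : ℝ) * ‖h m‖) := by
      calc ‖T‖ ≤ ∑ i ∈ range k, ‖(k.choose i : ℂ) * iteratedDeriv i G m * iteratedDeriv (k-i) h m‖ :=
            norm_sum_le _ _
        _ ≤ ∑ i ∈ range k, (k.factorial : ℝ) * ‖h m‖ * ((k.choose i : ℝ) * (γ*ρ₀)^(k-i)) := by
            refine Finset.sum_le_sum fun i hi => ?_
            have hik : i ≤ k := (mem_range.mp hi).le
            rw [norm_mul, norm_mul, Complex.norm_natCast]
            have e1 : ‖iteratedDeriv i G m‖ ≤ (i.factorial : ℝ) * (k.choose i) * ρ₀ ^ (k-i) := by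
              rw [hGdef]; exact iD_G_norm C k i hcard hik m ρ₀ hroots_m
            have e2 : ‖iteratedDeriv (k-i) h m‖ ≤ ((k-i).factorial : ℝ) * γ ^ (k-i) * ‖h m‖ :=
              hcoefm (k-i)
            calc (k.choose i : ℝ) * ‖iteratedDeriv i G m‖ * ‖iteratedDeriv (k-i) h m‖
                ≤ (k.choose i : ℝ) * ((i.factorial : ℝ) * (k.choose i) * ρ₀ ^ (k-i))
                    * (((k-i).factorial : ℝ) * γ ^ (k-i) * ‖h m‖) := by
                  apply mul_le_mul (mul_le_mul_of_nonneg_left e1 (by positivity)) e2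
                    (norm_nonneg _) (by positivity)
              _ = ((k.choose i * i.factorial * (k-i).factorial : ℕ) : ℝ) * ‖h m‖
                    * ((k.choose i : ℝ) * (γ*ρ₀)^(k-i)) := by
                  push_cast
                  rw [mul_pow]
                  ring
              _ = (k.factorial : ℝ) * ‖h m‖ * ((k.choose i : ℝ) * (γ*ρ₀)^(k-i)) := by
                  rw [Nat.choose_mul_factorial_mul_factorial hik]
        _ = (k.factorial : ℝ) * ‖h m‖ * (∑ i ∈ range k, (k.choose i : ℝ) * (γ*ρ₀)^(k-i)) := by
            rw [Finset.mul_sum]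
        _ ≤ (1/3 : ℝ) * ((k.factorial : ℝ) * ‖h m‖) := by
            have hs : ∑ i ∈ range k, (k.choose i : ℝ) * (γ*ρ₀)^(k-i) ≤ 1/3 := by
              apply sum_partial _ _ (mul_nonneg hγ0 hρ₀0)
              have h1 : (k:ℝ) * (γ * ρ₀) ≤ (k:ℝ) * (γ * ρ) := by
                apply mul_le_mul_of_nonneg_left _ (by positivity)
                exact mul_le_mul_of_nonneg_left hρ₀ρ hγ0
              linarith
            have hnn : (0:ℝ) ≤ (k.factorial : ℝ) * ‖h m‖ := by positivity
            nlinarith [Finset.sum_nonneg (fun i (_ : i ∈ range k) =>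
              mul_nonneg (by positivity) (pow_nonneg (mul_nonneg hγ0 hρ₀0) (k-i))
              : ∀ i ∈ range k, (0:ℝ) ≤ (k.choose i : ℝ) * (γ*ρ₀)^(k-i))]
    have hnorm : (2/3 : ℝ) * ((k.factorial : ℝ) * ‖h m‖) ≤ ‖iteratedDeriv k (fun y => G y * h y) m‖ := by
      rw [hsplit]
      have h1 : ‖(k.factorial : ℂ) * h m‖ ≤ ‖T + (k.factorial : ℂ) * h m‖ + ‖T‖ := by
        have h0 := norm_le_add_norm_add ((k.factorial : ℂ) * h m) T
        rwa [add_comm ((k.factorial : ℂ) * h m) T] at h0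
      have h2 : ‖(k.factorial : ℂ) * h m‖ = (k.factorial : ℝ) * ‖h m‖ := by
        rw [norm_mul, Complex.norm_natCast]
      linarith
    rw [norm_div, Complex.norm_natCast, le_div_iff₀ hfact]
    calc (2/3 : ℝ) * ‖h m‖ * (k.factorial : ℝ) = (2/3 : ℝ) * ((k.factorial : ℝ) * ‖h m‖) := by ring
      _ ≤ _ := hnorm
  -- upper bound
  have hup : ∀ w ∈ closedBall m r, ‖iteratedDeriv (k+1) f w‖
      ≤ ((k+1).factorial : ℝ) * (8 * γ * ‖h m‖) := by
    intro w hw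
    rw [hfeq]
    have hL := leibniz hGdiff hdiff (k+1) w
    rw [hL, Finset.sum_range_succ]
    have hz : iteratedDeriv (k+1) G w = 0 := by
      rw [hGdef]; exact iD_G_succ_zero C k hcard w
    rw [hz]
    simp only [mul_zero, zero_mul, add_zero]
    calc ‖∑ i ∈ range (k+1), ((k+1).choose i : ℂ) * iteratedDeriv i G w * iteratedDeriv (k+1-i) h w‖
        ≤ ∑ i ∈ range (k+1), ‖((k+1).choose i : ℂ) * iteratedDeriv i G w * iteratedDeriv (k+1-i) h w‖ :=
          norm_sum_le _ _
      _ ≤ ∑ i ∈ range (k+1), ((k+1).factorial : ℝ) * (2 * ‖h m‖ * (2*γ))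
            * ((k.choose i : ℝ) * (2*γ*ρ)^(k-i)) := by
          refine Finset.sum_le_sum fun i hi => ?_
          have hik : i ≤ k := by have := mem_range.mp hi; omega
          rw [norm_mul, norm_mul, Complex.norm_natCast]
          have e1 : ‖iteratedDeriv i G w‖ ≤ (i.factorial : ℝ) * (k.choose i) * ρ ^ (k-i) := by
            rw [hGdef]; exact iD_G_norm C k i hcard hik w ρ (hroots_w w hw)
          have e2 : ‖iteratedDeriv (k+1-i) h w‖
              ≤ 2 * ((k+1-i).factorial : ℝ) * (2*γ) ^ (k+1-i) * ‖h m‖ :=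
            hw_coeff hdiff hcoefm hγ0 hr hγr (k+1-i) w hw
          have hcf : ((k+1).choose i : ℝ) * (i.factorial : ℝ) * ((k+1-i).factorial : ℝ)
              = ((k+1).factorial : ℝ) := by
            exact_mod_cast congrArg (Nat.cast (R := ℝ))
              (Nat.choose_mul_factorial_mul_factorial (show i ≤ k+1 by omega))
          have hpow : (2*γ)^(k+1-i) = (2*γ)^(k-i) * (2*γ) := by
            rw [show k+1-i = (k-i)+1 by omega, pow_succ]
          calc ((k+1).choose i : ℝ) * ‖iteratedDeriv i G w‖ * ‖iteratedDeriv (k+1-i) h w‖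
              ≤ ((k+1).choose i : ℝ) * ((i.factorial : ℝ) * (k.choose i) * ρ ^ (k-i))
                  * (2 * ((k+1-i).factorial : ℝ) * (2*γ) ^ (k+1-i) * ‖h m‖) := by
                apply mul_le_mul (mul_le_mul_of_nonneg_left e1 (by positivity)) e2
                  (norm_nonneg _) (by positivity)
            _ = ((k+1).factorial : ℝ) * (2 * ‖h m‖ * (2*γ)) * ((k.choose i : ℝ) * (2*γ*ρ)^(k-i)) := by
                rw [hpow, mul_pow, ← hcf]
                ring
      _ ≤ ((k+1).factorial : ℝ) * (8 * γ * ‖h m‖) := by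
          rw [← Finset.mul_sum]
          have hs : ∑ i ∈ range (k+1), (k.choose i : ℝ) * (2*γ*ρ)^(k-i) ≤ 2 := by
            apply sum_full _ _ (by positivity)
            nlinarith
          have hnn : (0:ℝ) ≤ ((k+1).factorial : ℝ) * (2 * ‖h m‖ * (2*γ)) := by positivity
          nlinarith [Finset.sum_nonneg (fun i (_ : i ∈ range (k+1)) =>
              mul_nonneg (by positivity) (pow_nonneg (by positivity) (k-i))
              : ∀ i ∈ range (k+1), (0:ℝ) ≤ (k.choose i : ℝ) * (2*γ*ρ)^(k-i))]
  -- conclusion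
  have he : (2:ℝ) ≤ Real.exp 1 := by linarith [Real.add_one_le_exp (1:ℝ)]
  set Fk := ‖iteratedDeriv k f m / (k.factorial : ℂ)‖ with hFk
  have hFk0 : 0 ≤ Fk := norm_nonneg _
  apply Real.sSup_le
  · rintro x ⟨w, hw, rfl⟩
    show ‖iteratedDeriv (k+1) f w‖ / ((k+1).factorial : ℝ) ≤ 16 * Real.exp 1 * γ * Fk
    rw [div_le_iff₀ hfact1]
    calc ‖iteratedDeriv (k+1) f w‖ ≤ ((k+1).factorial : ℝ) * (8 * γ * ‖h m‖) := hup w hw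
      _ ≤ ((k+1).factorial : ℝ) * (8 * γ * ((3/2) * Fk)) := by
          gcongr
          linarith
      _ = (12 * γ * Fk) * ((k+1).factorial : ℝ) := by ring
      _ ≤ 16 * Real.exp 1 * γ * Fk * ((k+1).factorial : ℝ) := by
          have h12 : (12:ℝ) ≤ 16 * Real.exp 1 := by linarith
          have hnn : (0:ℝ) ≤ γ * Fk * ((k+1).factorial : ℝ) :=
            mul_nonneg (mul_nonneg hγ0 hFk0) hfact1.le
          have hfin := mul_le_mul_of_nonneg_right h12 hnn
          linarith [hfin]
  · have : (0:ℝ) ≤ 16 * Real.exp 1 := by positivity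
    exact mul_nonneg (mul_nonneg this hγ0) hFk0
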